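/- Let W = Q wr_Δ P be the wreath product of an elementary abelian p-group Q by a permutation p-group P on Δ, with base group B. Then [B, P] equals V, the subgroup of B consisting of all functions g : Δ → Q such that for every P-orbit Δ_i of Δ, the product ∏_{δ ∈ Δ_i} g(δ) is trivial. -/

import Mathlib

/-- The action of `P` on the base group `Δ → Q` of the wreath product,
permuting coordinates: `(σ • f) δ = f (σ⁻¹ • δ)`. -/
def wreathMulAut (Q : Type*) (Δ : Type*) (P : Type*) [Group Q] [Group P] [MulAction P Δ] :
    P →* MulAut (Δ → Q) where
  toFun σ := MulEquiv.arrowCongr (MulAction.toPerm σ) (MulEquiv.refl Q)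
  map_one' := by
    ext f δ
    simp [MulEquiv.arrowCongr]
  map_mul' σ τ := by
    ext f δ
    simp [MulEquiv.arrowCongr, mul_smul]

/-- The wreath product `Q wr_Δ P`, with base group `Δ → Q` and top group `P`. -/
abbrev WreathProduct (Q Δ P : Type*) [Group Q] [Group P] [MulAction P Δ] :=
  SemidirectProduct (Δ → Q) P (wreathMulAut Q Δ P)

instance (Q Δ P : Type*) [Group Q] [Group P] [MulAction P Δ] [Finite Q] [Finite Δ]
    [Finite P] : Finite (WreathProduct Q Δ P) :=
  Finite.of_injective (fun w => (w.left, w.right)) fun a b h => by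
    cases a; cases b
    simpa [SemidirectProduct.ext_iff, Prod.ext_iff] using h

open scoped Classical
open scoped Classical

section Aux
variable {Q Δ P : Type*} [CommGroup Q] [Group P] [MulAction P Δ]

lemma wreathMulAut_apply (σ : P) (f : Δ → Q) (δ : Δ) :
    wreathMulAut Q Δ P σ f δ = f (σ⁻¹ • δ) := rfl

lemma wreath_commutator_eq (f : Δ → Q) (σ : P) :
    @Bracket.bracket _ _ commutatorElement (SemidirectProduct.inl f : WreathProduct Q Δ P)
      (SemidirectProduct.inr σ : WreathProduct Q Δ P)
      = SemidirectProduct.inl (f * (wreathMulAut Q Δ P σ f)⁻¹) := by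
  show (SemidirectProduct.inl f : WreathProduct Q Δ P) * SemidirectProduct.inr σ *
    (SemidirectProduct.inl f)⁻¹ * (SemidirectProduct.inr σ)⁻¹ = _
  ext x
  · simp only [SemidirectProduct.mul_left, SemidirectProduct.inv_left, SemidirectProduct.mul_right, SemidirectProduct.inv_right, SemidirectProduct.left_inl, SemidirectProduct.right_inl, SemidirectProduct.left_inr, SemidirectProduct.right_inr]
    simp [wreathMulAut, MulEquiv.arrowCongr]
  · simp [SemidirectProduct.mul_right, SemidirectProduct.inv_right]

lemma elementary_mem (δ : Δ) (q : Q) (σ : P) :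
    (SemidirectProduct.inl (Pi.mulSingle δ q * (Pi.mulSingle (σ • δ) q)⁻¹) :
        WreathProduct Q Δ P) ∈
      ⁅((SemidirectProduct.inl : (Δ → Q) →* WreathProduct Q Δ P).range),
        ((SemidirectProduct.inr : P →* WreathProduct Q Δ P).range)⁆ := by
  have h : wreathMulAut Q Δ P σ (Pi.mulSingle δ q) = Pi.mulSingle (σ • δ) q := by
    funext d
    simp only [wreathMulAut_apply, Pi.mulSingle_apply]
    congr 1
    exact propext inv_smul_eq_iff
  rw [← h, ← wreath_commutator_eq]
  exact Subgroup.commutator_mem_commutator ⟨_, rfl⟩ ⟨_, rfl⟩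

variable (Q P) in
/-- The subgroup `V` of the base group. -/
def orbitProdSubgroup [Fintype Δ] : Subgroup (Δ → Q) where
  carrier := {g : Δ → Q | ∀ δ₀ : Δ,
    ∏ δ ∈ Finset.univ.filter (fun d => d ∈ MulAction.orbit P δ₀), g δ = 1}
  one_mem' := by intro δ₀; simp
  mul_mem' := by
    intro a b ha hb δ₀
    simp only [Pi.mul_apply, Finset.prod_mul_distrib, ha δ₀, hb δ₀, one_mul]
  inv_mem' := by
    intro a ha δ₀
    simp only [Pi.inv_apply, Finset.prod_inv_distrib, ha δ₀, inv_one]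

end Aux

theorem commutator_base_top_eq (p : ℕ) (hp : p.Prime) (Q Δ P : Type*) [CommGroup Q]
    [Group P] [Fintype Δ] [MulAction P Δ] [FaithfulSMul P Δ]
    (hQ : ∀ x : Q, x ^ p = 1) (hP : IsPGroup p P) :
    ((⁅((SemidirectProduct.inl : (Δ → Q) →* WreathProduct Q Δ P).range),
        ((SemidirectProduct.inr : P →* WreathProduct Q Δ P).range)⁆ :
      Subgroup (WreathProduct Q Δ P)) : Set (WreathProduct Q Δ P)) =
      (SemidirectProduct.inl : (Δ → Q) →* WreathProduct Q Δ P) ''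
        {g : Δ → Q | ∀ δ₀ : Δ,
          ∏ δ ∈ Finset.univ.filter (fun d => d ∈ MulAction.orbit P δ₀), g δ = 1} := by
  classical
  have key : (⁅((SemidirectProduct.inl : (Δ → Q) →* WreathProduct Q Δ P).range),
        ((SemidirectProduct.inr : P →* WreathProduct Q Δ P).range)⁆ :
      Subgroup (WreathProduct Q Δ P)) =
      (orbitProdSubgroup Q P).map SemidirectProduct.inl := by
    apply le_antisymm
    · rw [Subgroup.commutator_le]
      rintro _ ⟨f, rfl⟩ _ ⟨σ, rfl⟩
      rw [wreath_commutator_eq]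
      refine Subgroup.mem_map_of_mem _ ?_
      intro δ₀
      simp only [Pi.mul_apply, Pi.inv_apply, wreathMulAut_apply, Finset.prod_mul_distrib,
        Finset.prod_inv_distrib]
      have hre : ∏ δ ∈ Finset.univ.filter (fun d => d ∈ MulAction.orbit P δ₀), f (σ⁻¹ • δ)
          = ∏ δ ∈ Finset.univ.filter (fun d => d ∈ MulAction.orbit P δ₀), f δ := by
        refine Finset.prod_equiv (MulAction.toPerm σ⁻¹ : Equiv.Perm Δ) ?_ ?_
        · intro δ
          simp only [Finset.mem_filter, Finset.mem_univ, true_and, MulAction.toPerm_apply]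
          constructor
          · rintro ⟨τ, rfl⟩; exact ⟨σ⁻¹ * τ, (mul_smul _ _ _)⟩
          · rintro h
            obtain ⟨τ, hτ⟩ := h
            exact ⟨σ * τ, by simp only [mul_smul]; rw [show τ • δ₀ = σ⁻¹ • δ from hτ]; simp⟩
        · intro δ _; rfl
      rw [hre, mul_inv_cancel]
    · rw [Subgroup.map_le_iff_le_comap]
      intro g hg
      -- representative of each orbit
      set rep : Δ → Δ := fun δ => (Quotient.mk (MulAction.orbitRel P Δ) δ).out with hrepdef
      have hrep1 : ∀ δ, rep δ ∈ MulAction.orbit P δ := fun δ =>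
        MulAction.orbitRel_apply.mp (Quotient.mk_out δ)
      have hrep2 : ∀ δ δ', δ' ∈ MulAction.orbit P δ → rep δ' = rep δ := fun δ δ' h =>
        congrArg Quotient.out (Quotient.sound (MulAction.orbitRel_apply.mpr h))
      have horbsymm : ∀ δ δ' : Δ, δ' ∈ MulAction.orbit P δ → δ ∈ MulAction.orbit P δ' := by
        rintro δ _ ⟨τ, rfl⟩; exact ⟨τ⁻¹, by simp⟩
      have hone : (∏ δ : Δ, (Pi.mulSingle (rep δ) (g δ) : Δ → Q)) = 1 := by
        funext x
        rw [Finset.prod_apply, Pi.one_apply]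
        simp only [Pi.mulSingle_apply]
        rw [← Finset.prod_filter]
        by_cases hx : rep x = x
        · have hset : Finset.univ.filter (fun δ => x = rep δ)
              = Finset.univ.filter (fun d => d ∈ MulAction.orbit P x) := by
            ext δ
            simp only [Finset.mem_filter, Finset.mem_univ, true_and]
            constructor
            · intro h
              exact horbsymm δ x (h ▸ hrep1 δ)
            · intro h
              rw [hrep2 x δ h, hx]
          rw [hset]
          exact hg x
        · have hempty : Finset.univ.filter (fun δ => x = rep δ) = ∅ := by
            ext δ
            simp only [Finset.mem_filter, Finset.mem_univ, true_and, Finset.notMem_empty,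
              iff_false]
            intro h
            apply hx
            rw [h, hrep2 δ (rep δ) (hrep1 δ), ← h]
          rw [hempty, Finset.prod_empty]
      have hsplit : g = ∏ δ : Δ,
          ((Pi.mulSingle δ (g δ) : Δ → Q) * (Pi.mulSingle (rep δ) (g δ))⁻¹) := by
        rw [Finset.prod_mul_distrib, Finset.prod_inv_distrib, hone, inv_one, mul_one,
          Finset.univ_prod_mulSingle]
      rw [hsplit]
      apply Subgroup.prod_mem
      intro δ _
      rw [Subgroup.mem_comap]
      obtain ⟨σ, hσ⟩ := hrep1 δ
      rw [← hσ]
      exact elementary_mem δ (g δ) σ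
  rw [key, Subgroup.coe_map]
  rfl
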